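/- Assume regularity condition (H). Let p_B ∈ (0,1) satisfy D_B(p_B) = 0 and p_C ∈ (0,1) satisfy D_C(p_C) = 0. If the map x ↦ F(x)^{J−1} is convex on [0,1], then p_C ≤ p_B; if the map x ↦ F(x)^{J−1} is concave on [0,1], then p_C ≥ p_B. (When the distribution of the best rival value is convex, the independent managed campaign yields lower posted prices — and hence higher total welfare and consumer surplus — than data-augmented bidding; with a concave distribution the comparison is reversed.) -/
import Mathlib


open intervalIntegral Set MeasureTheory

/-- If F^{J−1} is convex on [0,1], the independent
managed-campaign price is below the data-augmented bidding price (p_C ≤ p_B);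
if F^{J−1} is concave, the comparison reverses (p_B ≤ p_C). -/
theorem independent_vs_bidding_price_comparison
    (f F : ℝ → ℝ)
    (hf_cont : ContinuousOn f (Set.Icc 0 1))
    (hf_pos : ∀ x ∈ Set.Icc (0:ℝ) 1, 0 < f x)
    (hf_logconcave : ConcaveOn ℝ (Set.Icc 0 1) (Real.log ∘ f))
    (hf_int : (∫ t in (0:ℝ)..1, f t) = 1)
    (hF : ∀ x, F x = ∫ t in (0:ℝ)..x, f t)
    (J : ℕ) (hJ : 2 ≤ J)
    (lam : ℝ) (hlam : lam ∈ Set.Ioo (0:ℝ) 1)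
    (hreg : AntitoneOn (fun p : ℝ => 1 - F p - p * f p) (Set.Icc 0 1))
    (pB pC : ℝ) (hpB : pB ∈ Set.Ioo (0:ℝ) 1) (hpC : pC ∈ Set.Ioo (0:ℝ) 1)
    (hB : (1 - lam) * (1 - F pB - pB * f pB)
        + lam * (J : ℝ) * (∫ v in pB..1, F (v - pB) ^ (J - 1) * f v) = 0)
    (hC : (1 - lam) * (1 - F pC - pC * f pC)
        + lam * (J : ℝ) * (∫ v in pC..1,
            (F v ^ (J - 1) - pC * (((J : ℝ) - 1) * F v ^ (J - 2) * f v)) * f v) = 0) :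
    (ConvexOn ℝ (Set.Icc 0 1) (fun x => F x ^ (J - 1)) → pC ≤ pB) ∧
    (ConcaveOn ℝ (Set.Icc 0 1) (fun x => F x ^ (J - 1)) → pB ≤ pC) := by
  obtain ⟨hl0, hl1⟩ := hlam
  obtain ⟨hpB0, hpB1⟩ := hpB
  obtain ⟨hpC0, hpC1⟩ := hpC
  have hJ1 : 0 < (J : ℝ) := by positivity
  -- basic integrability
  have hfInt : ∀ a b : ℝ, a ∈ Icc (0:ℝ) 1 → b ∈ Icc (0:ℝ) 1 →
      IntervalIntegrable f volume a b := by
    intro a b ha hb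
    apply ContinuousOn.intervalIntegrable
    apply hf_cont.mono
    rw [show Icc (0:ℝ) 1 = uIcc (0:ℝ) 1 by rw [uIcc_of_le zero_le_one]]
    exact uIcc_subset_uIcc (by rwa [uIcc_of_le zero_le_one]) (by rwa [uIcc_of_le zero_le_one])
  -- continuity of F
  have hFcont : ContinuousOn F (Icc 0 1) := by
    have h := intervalIntegral.continuousOn_primitive_interval (a := (0:ℝ)) (b := 1)
      (μ := volume) (f := f) (by rw [uIcc_of_le zero_le_one]; exact hf_cont.integrableOn_Icc)
    rw [uIcc_of_le zero_le_one] at h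
    exact h.congr (fun x _ => hF x)
  -- additivity / strict monotonicity of F
  have hFadd : ∀ x y : ℝ, x ∈ Icc (0:ℝ) 1 → y ∈ Icc (0:ℝ) 1 →
      F y = F x + ∫ t in x..y, f t := by
    intro x y hx hy
    rw [hF x, hF y,
      ← intervalIntegral.integral_add_adjacent_intervals
        (hfInt 0 x ⟨le_rfl, zero_le_one⟩ hx) (hfInt x y hx hy)]
  have hFlt : ∀ x y : ℝ, x ∈ Icc (0:ℝ) 1 → y ∈ Icc (0:ℝ) 1 → x < y → F x < F y := by
    intro x y hx hy hxy
    have hpos : 0 < ∫ t in x..y, f t := by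
      apply intervalIntegral.intervalIntegral_pos_of_pos_on (hfInt x y hx hy)
      · intro t ht
        exact hf_pos t ⟨le_trans hx.1 ht.1.le, le_trans ht.2.le hy.2⟩
      · exact hxy
    have := hFadd x y hx hy
    linarith
  have hFle : ∀ x y : ℝ, x ∈ Icc (0:ℝ) 1 → y ∈ Icc (0:ℝ) 1 → x ≤ y → F x ≤ F y := by
    intro x y hx hy hxy
    rcases eq_or_lt_of_le hxy with rfl | h
    · exact le_rfl
    · exact (hFlt x y hx hy h).le
  have hF0 : F 0 = 0 := by rw [hF]; simp
  have hFnonneg : ∀ x ∈ Icc (0:ℝ) 1, 0 ≤ F x := by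
    intro x hx
    rw [← hF0]
    exact hFle 0 x ⟨le_rfl, zero_le_one⟩ hx hx.1
  -- FTC : derivative of F within Iio v
  have hFderiv : ∀ v ∈ Ioc (0:ℝ) 1, HasDerivWithinAt F (f v) (Iio v) v := by
    intro v hv
    have hmem : Set.Icc (0:ℝ) 1 ∈ nhdsWithin v (Set.Iic v) := by
      have h2 : Set.Ioo (0:ℝ) 2 ∈ nhdsWithin v (Set.Iic v) :=
        nhdsWithin_le_nhds (Ioo_mem_nhds hv.1 (by linarith [hv.2]))
      filter_upwards [h2, self_mem_nhdsWithin] with x hx hx'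
      exact ⟨hx.1.le, le_trans hx' hv.2⟩
    have hint : IntervalIntegrable f volume 0 v := hfInt 0 v ⟨le_rfl, zero_le_one⟩ ⟨hv.1.le, hv.2⟩
    have hmeas : StronglyMeasurableAtFilter f (nhdsWithin v (Set.Iic v)) :=
      ⟨Set.Icc 0 1, hmem, hf_cont.aestronglyMeasurable measurableSet_Icc⟩
    have hcw : ContinuousWithinAt f (Set.Iic v) v :=
      (hf_cont v ⟨hv.1.le, hv.2⟩).mono_of_mem_nhdsWithin hmem
    have hd : HasDerivWithinAt (fun u => ∫ t in (0:ℝ)..u, f t) (f v) (Set.Iic v) v :=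
      intervalIntegral.integral_hasDerivWithinAt_right hint hmeas hcw
    have h := hd.mono Set.Iio_subset_Iic_self
    exact h.congr (fun x _ => hF x) (hF v)
  -- derivative of G = F ^ (J-1)
  have hGderiv : ∀ v ∈ Ioc (0:ℝ) 1, HasDerivWithinAt (fun x => F x ^ (J - 1))
      (((J : ℝ) - 1) * F v ^ (J - 2) * f v) (Iio v) v := by
    intro v hv
    have h := (hFderiv v hv).pow (J - 1)
    have e2 : J - 1 - 1 = J - 2 := by omega
    rw [e2, Nat.cast_sub (by omega : 1 ≤ J), Nat.cast_one] at h
    exact h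
  -- continuity of the bidding integrand
  have hcontB : ∀ p q : ℝ, 0 ≤ p → p ≤ q →
      ContinuousOn (fun v => F (v - p) ^ (J - 1) * f v) (Icc q 1) := by
    intro p q hp hpq
    apply ContinuousOn.mul
    · apply ContinuousOn.pow
      apply hFcont.comp ((continuous_sub_right p).continuousOn)
      intro v hv
      have hm : v - p ∈ Icc (0:ℝ) 1 := ⟨by linarith [hv.1], by linarith [hv.2]⟩
      simpa using hm
    · exact hf_cont.mono (Icc_subset_Icc (le_trans hp hpq) le_rfl)
  -- continuity of the campaign integrand
  have hcontC : ContinuousOn (fun v =>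
      (F v ^ (J - 1) - pC * (((J : ℝ) - 1) * F v ^ (J - 2) * f v)) * f v) (Icc pC 1) := by
    have hsub : Icc pC 1 ⊆ Icc (0:ℝ) 1 := Icc_subset_Icc hpC0.le le_rfl
    exact (((hFcont.mono hsub).pow _).sub (continuousOn_const.mul
      ((continuousOn_const.mul ((hFcont.mono hsub).pow _)).mul
        (hf_cont.mono hsub)))).mul (hf_cont.mono hsub)
  -- strict antitonicity of the bidding FOC
  have hBstrict : ∀ p q : ℝ, p ∈ Ioo (0:ℝ) 1 → q ∈ Ioo (0:ℝ) 1 → p < q →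
      (1 - lam) * (1 - F q - q * f q) + lam * (J : ℝ) * (∫ v in q..1, F (v - q) ^ (J - 1) * f v)
      < (1 - lam) * (1 - F p - p * f p)
        + lam * (J : ℝ) * (∫ v in p..1, F (v - p) ^ (J - 1) * f v) := by
    intro p q hp hq hpq
    have h1 : (1 - lam) * (1 - F q - q * f q) ≤ (1 - lam) * (1 - F p - p * f p) :=
      mul_le_mul_of_nonneg_left
        (hreg ⟨hp.1.le, hp.2.le⟩ ⟨hq.1.le, hq.2.le⟩ hpq.le) (by linarith)
    have h2a : (∫ v in q..1, F (v - q) ^ (J - 1) * f v)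
        < ∫ v in q..1, F (v - p) ^ (J - 1) * f v := by
      apply intervalIntegral.integral_lt_integral_of_continuousOn_of_le_of_exists_lt hq.2
        (hcontB q q hq.1.le le_rfl) (hcontB p q hp.1.le hpq.le)
      · intro x hx
        have hx1 : x ∈ Icc (0:ℝ) 1 := ⟨le_trans hq.1.le hx.1.le, hx.2⟩
        have hxq : x - q ∈ Icc (0:ℝ) 1 := ⟨by linarith [hx.1], by linarith [hx.2, hq.1]⟩
        have hxp : x - p ∈ Icc (0:ℝ) 1 := ⟨by linarith [hx.1, hpq], by linarith [hx.2, hp.1]⟩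
        have := hFle (x - q) (x - p) hxq hxp (by linarith)
        exact mul_le_mul_of_nonneg_right
          (pow_le_pow_left₀ (hFnonneg _ hxq) this _) (hf_pos x hx1).le
      · refine ⟨1, right_mem_Icc.mpr hq.2.le, ?_⟩
        have h1q : (1 : ℝ) - q ∈ Icc (0:ℝ) 1 := ⟨by linarith [hq.2], by linarith [hq.1]⟩
        have h1p : (1 : ℝ) - p ∈ Icc (0:ℝ) 1 := ⟨by linarith [hp.2], by linarith [hp.1]⟩
        have hlt : F (1 - q) < F (1 - p) := hFlt _ _ h1q h1p (by linarith)
        exact mul_lt_mul_of_pos_right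
          (pow_lt_pow_left₀ hlt (hFnonneg _ h1q) (by omega)) (hf_pos 1 ⟨zero_le_one, le_rfl⟩)
    have h2b : (∫ v in q..1, F (v - p) ^ (J - 1) * f v)
        ≤ ∫ v in p..1, F (v - p) ^ (J - 1) * f v := by
      have hiq : IntervalIntegrable (fun v => F (v - p) ^ (J - 1) * f v) volume q 1 :=
        (hcontB p q hp.1.le hpq.le).intervalIntegrable_of_Icc hq.2.le
      have hipq : IntervalIntegrable (fun v => F (v - p) ^ (J - 1) * f v) volume p q :=
        (((hcontB p p hp.1.le le_rfl).mono
          (Icc_subset_Icc le_rfl hq.2.le))).intervalIntegrable_of_Icc hpq.le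
      rw [← intervalIntegral.integral_add_adjacent_intervals hipq hiq]
      have hnn : 0 ≤ ∫ v in p..q, F (v - p) ^ (J - 1) * f v := by
        apply intervalIntegral.integral_nonneg hpq.le
        intro u hu
        have hu1 : u ∈ Icc (0:ℝ) 1 := ⟨le_trans hp.1.le hu.1, le_trans hu.2 hq.2.le⟩
        exact mul_nonneg (pow_nonneg (hFnonneg _
          ⟨by linarith [hu.1], by linarith [hu1.2, hp.1]⟩) _) (hf_pos u hu1).le
      linarith
    have h2 : lam * (J : ℝ) * (∫ v in q..1, F (v - q) ^ (J - 1) * f v)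
        < lam * (J : ℝ) * (∫ v in p..1, F (v - p) ^ (J - 1) * f v) :=
      mul_lt_mul_of_pos_left (lt_of_lt_of_le h2a h2b) (by positivity)
    linarith
  have hljnn : (0:ℝ) ≤ lam * (J : ℝ) := by positivity
  -- integrability at pC
  have hIB : IntervalIntegrable (fun v => F (v - pC) ^ (J - 1) * f v) volume pC 1 :=
    (hcontB pC pC hpC0.le le_rfl).intervalIntegrable_of_Icc hpC1.le
  have hIC : IntervalIntegrable (fun v =>
      (F v ^ (J - 1) - pC * (((J : ℝ) - 1) * F v ^ (J - 2) * f v)) * f v) volume pC 1 :=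
    hcontC.intervalIntegrable_of_Icc hpC1.le
  -- common membership facts for the slope argument
  have hmem : ∀ v ∈ Icc pC 1, v ∈ Icc (0:ℝ) 1 ∧ v - pC ∈ Icc (0:ℝ) 1 ∧ v - pC < v
      ∧ v ∈ Ioc (0:ℝ) 1 := by
    intro v hv
    exact ⟨⟨le_trans hpC0.le hv.1, hv.2⟩, ⟨by linarith [hv.1], by linarith [hv.2]⟩,
      by linarith, ⟨lt_of_lt_of_le hpC0 hv.1, hv.2⟩⟩
  constructor
  · -- convex case : pC ≤ pB
    intro hconv
    by_contra hnle
    push_neg at hnle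
    have hineq : ∀ v ∈ Icc pC 1,
        (F v ^ (J - 1) - pC * (((J : ℝ) - 1) * F v ^ (J - 2) * f v)) * f v
          ≤ F (v - pC) ^ (J - 1) * f v := by
      intro v hv
      obtain ⟨hv01, hvp01, hlt, hvIoc⟩ := hmem v hv
      have hs := hconv.slope_le_of_hasDerivWithinAt_Iio hvp01 hv01 hlt (hGderiv v hvIoc)
      rw [slope_def_field] at hs
      rw [show v - (v - pC) = pC by ring, div_le_iff₀ hpC0] at hs
      have base : F v ^ (J - 1) - pC * (((J : ℝ) - 1) * F v ^ (J - 2) * f v)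
          ≤ F (v - pC) ^ (J - 1) := by nlinarith [hs]
      exact mul_le_mul_of_nonneg_right base (hf_pos v hv01).le
    have hle := intervalIntegral.integral_mono_on hpC1.le hIC hIB hineq
    have hDBC : 0 ≤ (1 - lam) * (1 - F pC - pC * f pC)
        + lam * (J : ℝ) * (∫ v in pC..1, F (v - pC) ^ (J - 1) * f v) := by
      nlinarith [mul_le_mul_of_nonneg_left hle hljnn]
    have hstep := hBstrict pB pC ⟨hpB0, hpB1⟩ ⟨hpC0, hpC1⟩ hnle
    linarith [hB, hstep, hDBC]
  · -- concave case : pB ≤ pC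
    intro hconc
    by_contra hnle
    push_neg at hnle
    have hineq : ∀ v ∈ Icc pC 1,
        F (v - pC) ^ (J - 1) * f v
          ≤ (F v ^ (J - 1) - pC * (((J : ℝ) - 1) * F v ^ (J - 2) * f v)) * f v := by
      intro v hv
      obtain ⟨hv01, hvp01, hlt, hvIoc⟩ := hmem v hv
      have hs := hconc.le_slope_of_hasDerivWithinAt_Iio hvp01 hv01 hlt (hGderiv v hvIoc)
      rw [slope_def_field] at hs
      rw [show v - (v - pC) = pC by ring, le_div_iff₀ hpC0] at hs
      have base : F (v - pC) ^ (J - 1)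
          ≤ F v ^ (J - 1) - pC * (((J : ℝ) - 1) * F v ^ (J - 2) * f v) := by nlinarith [hs]
      exact mul_le_mul_of_nonneg_right base (hf_pos v hv01).le
    have hle := intervalIntegral.integral_mono_on hpC1.le hIB hIC hineq
    have hDBC : (1 - lam) * (1 - F pC - pC * f pC)
        + lam * (J : ℝ) * (∫ v in pC..1, F (v - pC) ^ (J - 1) * f v) ≤ 0 := by
      nlinarith [mul_le_mul_of_nonneg_left hle hljnn]
    have hstep := hBstrict pC pB ⟨hpC0, hpC1⟩ ⟨hpB0, hpB1⟩ hnle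
    linarith [hB, hstep, hDBC]
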